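/- Let g : M → ℝ be bounded measurable with 0 ≤ g ≤ 1, f a probability density, λ > 0, and σ*(m) = f(m) e^{-g(m)/λ}/Z with Z = ∫ f e^{-g/λ}. Then the attacker's optimal cost V(λ) = ∫ g dσ* + λ D(σ*‖f) = −λ ln Z is nondecreasing in λ, satisfies 0 ≤ V(λ) ≤ ∫ g df for all λ > 0, and V(λ) → ∫ g df as λ → ∞ while V(λ) → ess inf g as λ → 0⁺. -/

import Mathlib

open MeasureTheory Real Filter
open scoped Topology NNReal ENNReal

theorem stmt17 {M : Type*} [MeasurableSpace M] (μ : Measure M)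
    (f g : M → ℝ) (hf_meas : Measurable f) (hg_meas : Measurable g)
    (hf_nonneg : ∀ m, 0 ≤ f m) (hf_int : Integrable f μ) (hf_one : ∫ m, f m ∂μ = 1)
    (hg0 : ∀ m, 0 ≤ g m) (hg1 : ∀ m, g m ≤ 1)
    (Z : ℝ → ℝ) (hZ : ∀ lam, Z lam = ∫ m, f m * Real.exp (-(g m) / lam) ∂μ)
    (V : ℝ → ℝ) (hV : ∀ lam, V lam = -lam * Real.log (Z lam)) :
    (∀ lam, 0 < lam →
      (∫ m, g m * (f m * Real.exp (-(g m) / lam) / Z lam) ∂μ)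
        + lam * ∫ m, (f m * Real.exp (-(g m) / lam) / Z lam)
            * Real.log ((f m * Real.exp (-(g m) / lam) / Z lam) / f m) ∂μ
      = V lam) ∧
    MonotoneOn V (Set.Ioi (0:ℝ)) ∧
    (∀ lam, 0 < lam → 0 ≤ V lam ∧ V lam ≤ ∫ m, g m * f m ∂μ) ∧
    Filter.Tendsto V Filter.atTop (nhds (∫ m, g m * f m ∂μ)) ∧
    Filter.Tendsto V (nhdsWithin 0 (Set.Ioi (0:ℝ)))
      (nhds (essInf g (μ.withDensity fun m => ENNReal.ofReal (f m)))) := by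
  -- exp bounds
  have hexp01 : ∀ lam : ℝ, 0 < lam → ∀ m, Real.exp (-(g m) / lam) ≤ 1 := by
    intro lam hl m
    exact Real.exp_le_one_iff.mpr
      (div_nonpos_of_nonpos_of_nonneg (neg_nonpos.mpr (hg0 m)) hl.le)
  -- integrability of the tilted density
  have hInt : ∀ lam : ℝ, 0 < lam →
      Integrable (fun m => f m * Real.exp (-(g m) / lam)) μ := by
    intro lam hl
    refine hf_int.mono' ((hf_meas.mul ((hg_meas.neg.div_const lam).exp)).aestronglyMeasurable) ?_
    refine Eventually.of_forall fun m => ?_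
    have h1 : 0 ≤ f m * Real.exp (-(g m) / lam) :=
      mul_nonneg (hf_nonneg m) (Real.exp_pos _).le
    rw [Real.norm_eq_abs, abs_of_nonneg h1]
    calc f m * Real.exp (-(g m) / lam) ≤ f m * 1 :=
          mul_le_mul_of_nonneg_left (hexp01 lam hl m) (hf_nonneg m)
      _ = f m := mul_one _
  -- Z ≤ 1
  have hZ1 : ∀ lam : ℝ, 0 < lam → Z lam ≤ 1 := by
    intro lam hl
    rw [hZ, ← hf_one]
    refine integral_mono (hInt lam hl) hf_int fun m => ?_
    calc f m * Real.exp (-(g m) / lam) ≤ f m * 1 :=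
          mul_le_mul_of_nonneg_left (hexp01 lam hl m) (hf_nonneg m)
      _ = f m := mul_one _
  -- Z > 0
  have hZpos : ∀ lam : ℝ, 0 < lam → 0 < Z lam := by
    intro lam hl
    have hlb : Real.exp (-(1:ℝ) / lam) ≤ Z lam := by
      rw [hZ]
      have hmono : ∀ m, f m * Real.exp (-(1:ℝ) / lam) ≤ f m * Real.exp (-(g m) / lam) := by
        intro m
        refine mul_le_mul_of_nonneg_left (Real.exp_le_exp.mpr ?_) (hf_nonneg m)
        gcongr
        exact hg1 m
      calc Real.exp (-(1:ℝ) / lam) = (∫ m, f m ∂μ) * Real.exp (-(1:ℝ) / lam) := by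
            rw [hf_one, one_mul]
        _ = ∫ m, f m * Real.exp (-(1:ℝ) / lam) ∂μ := (integral_mul_const _ _).symm
        _ ≤ _ := integral_mono (hf_int.mul_const _) (hInt lam hl) hmono
    exact lt_of_lt_of_le (Real.exp_pos _) hlb
  -- the tilted probability measure ν
  set ν : Measure M := μ.withDensity fun m => ENNReal.ofReal (f m) with hν
  have hν' : ν = μ.withDensity fun m => (((f m).toNNReal : NNReal) : ENNReal) := rfl
  have hνint : ∀ u : M → ℝ, ∫ m, u m ∂ν = ∫ m, f m * u m ∂μ := by
    intro u
    rw [hν', integral_withDensity_eq_integral_smul hf_meas.real_toNNReal u]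
    refine integral_congr_ae (Eventually.of_forall fun m => ?_)
    show (f m).toNNReal • u m = f m * u m
    rw [NNReal.smul_def, smul_eq_mul, Real.coe_toNNReal _ (hf_nonneg m)]
  haveI hPν : IsProbabilityMeasure ν := by
    constructor
    rw [hν, withDensity_apply _ MeasurableSet.univ, setLIntegral_univ,
      ← ofReal_integral_eq_lintegral_ofReal hf_int (Eventually.of_forall hf_nonneg),
      hf_one, ENNReal.ofReal_one]
  have hZν : ∀ lam : ℝ, Z lam = ∫ m, Real.exp (-(g m) / lam) ∂ν := by
    intro lam; rw [hZ, hνint]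
  have hIntν : ∀ lam : ℝ, 0 < lam → Integrable (fun m => Real.exp (-(g m) / lam)) ν := by
    intro lam hl
    refine (integrable_const (1:ℝ)).mono'
      ((hg_meas.neg.div_const lam).exp).aestronglyMeasurable (Eventually.of_forall fun m => ?_)
    rw [Real.norm_eq_abs, abs_of_nonneg (Real.exp_pos _).le]
    exact hexp01 lam hl m
  -- Part 1 : the identity
  have hpart1 : ∀ lam, 0 < lam →
      (∫ m, g m * (f m * Real.exp (-(g m) / lam) / Z lam) ∂μ)
        + lam * ∫ m, (f m * Real.exp (-(g m) / lam) / Z lam)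
            * Real.log ((f m * Real.exp (-(g m) / lam) / Z lam) / f m) ∂μ
      = V lam := by
    intro lam hl
    have hZp := hZpos lam hl
    have hZne : Z lam ≠ 0 := ne_of_gt hZp
    have hσint : Integrable (fun m => f m * Real.exp (-(g m) / lam) / Z lam) μ :=
      (hInt lam hl).div_const _
    have hσmeas : Measurable (fun m => f m * Real.exp (-(g m) / lam) / Z lam) :=
      (hf_meas.mul ((hg_meas.neg.div_const lam).exp)).div_const _
    have hσnn : ∀ m, 0 ≤ f m * Real.exp (-(g m) / lam) / Z lam := fun m =>
      div_nonneg (mul_nonneg (hf_nonneg m) (Real.exp_pos _).le) hZp.le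
    have hgσint : Integrable (fun m => g m * (f m * Real.exp (-(g m) / lam) / Z lam)) μ := by
      refine hσint.mono' (hg_meas.mul hσmeas).aestronglyMeasurable
        (Eventually.of_forall fun m => ?_)
      rw [Real.norm_eq_abs, abs_of_nonneg (mul_nonneg (hg0 m) (hσnn m))]
      calc g m * (f m * Real.exp (-(g m) / lam) / Z lam)
          ≤ 1 * (f m * Real.exp (-(g m) / lam) / Z lam) :=
            mul_le_mul_of_nonneg_right (hg1 m) (hσnn m)
        _ = _ := one_mul _
    have hσtot : ∫ m, f m * Real.exp (-(g m) / lam) / Z lam ∂μ = 1 := by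
      rw [integral_div, ← hZ lam, div_self hZne]
    have hlog : ∀ m, (f m * Real.exp (-(g m) / lam) / Z lam)
        * Real.log ((f m * Real.exp (-(g m) / lam) / Z lam) / f m)
        = (-(1/lam)) * (g m * (f m * Real.exp (-(g m) / lam) / Z lam))
          - Real.log (Z lam) * (f m * Real.exp (-(g m) / lam) / Z lam) := by
      intro m
      rcases (hf_nonneg m).eq_or_lt with h0 | hfpos
      · simp [← h0]
      · have h2 : (f m * Real.exp (-(g m) / lam) / Z lam) / f m
            = Real.exp (-(g m) / lam) / Z lam := by
          field_simp
        rw [h2, Real.log_div (Real.exp_ne_zero _) hZne, Real.log_exp]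
        ring
    have hS : ∫ m, (f m * Real.exp (-(g m) / lam) / Z lam)
        * Real.log ((f m * Real.exp (-(g m) / lam) / Z lam) / f m) ∂μ
        = (-(1/lam)) * (∫ m, g m * (f m * Real.exp (-(g m) / lam) / Z lam) ∂μ)
          - Real.log (Z lam) := by
      rw [integral_congr_ae (Eventually.of_forall hlog),
        integral_sub (hgσint.const_mul _) (hσint.const_mul _),
        integral_const_mul, integral_const_mul, hσtot, mul_one]
    rw [hS, hV]
    have hlne : lam ≠ 0 := ne_of_gt hl
    field_simp
    ring
  -- Part 2 : monotonicity
  have hmono : MonotoneOn V (Set.Ioi (0:ℝ)) := by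
    intro l1 hl1 l2 hl2 h12
    rcases h12.eq_or_lt with rfl | hlt
    · exact le_rfl
    have hl1' : (0:ℝ) < l1 := hl1
    have hl2' : (0:ℝ) < l2 := hl2
    have hθ0 : 0 < l1 / l2 := div_pos hl1' hl2'
    have hθ1 : l1 / l2 < 1 := (div_lt_one hl2').mpr hlt
    have hpow : ∀ m, Real.exp (-(g m) / l2) = (Real.exp (-(g m) / l1)) ^ (l1/l2) := by
      intro m
      rw [Real.rpow_def_of_pos (Real.exp_pos _), Real.log_exp]
      congr 1
      field_simp
    have hcomp_int : Integrable ((fun x : ℝ => x ^ (l1/l2)) ∘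
        fun m => Real.exp (-(g m) / l1)) ν := by
      refine (hIntν l2 hl2').congr (Eventually.of_forall fun m => ?_)
      simp only [Function.comp]
      exact hpow m
    have hJ := (Real.concaveOn_rpow hθ0.le hθ1.le).le_map_integral
      (fun x _ => (Real.continuousAt_rpow_const x (l1/l2) (Or.inr hθ0.le)).continuousWithinAt)
      isClosed_Ici (Eventually.of_forall fun m => Set.mem_Ici.mpr (Real.exp_pos _).le)
      (hIntν l1 hl1') hcomp_int
    have hkey : Z l2 ≤ Z l1 ^ (l1/l2) := by
      rw [hZν l2, hZν l1]
      calc ∫ m, Real.exp (-(g m) / l2) ∂ν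
          = ∫ m, (Real.exp (-(g m) / l1)) ^ (l1/l2) ∂ν :=
            integral_congr_ae (Eventually.of_forall fun m => hpow m)
        _ ≤ _ := hJ
    have hlogle : Real.log (Z l2) ≤ (l1/l2) * Real.log (Z l1) := by
      calc Real.log (Z l2) ≤ Real.log (Z l1 ^ (l1/l2)) :=
            Real.log_le_log (hZpos l2 hl2') hkey
        _ = (l1/l2) * Real.log (Z l1) := Real.log_rpow (hZpos l1 hl1') _
    rw [hV l1, hV l2]
    have h2 := mul_le_mul_of_nonneg_left hlogle hl2'.le
    have h3 : l2 * ((l1/l2) * Real.log (Z l1)) = l1 * Real.log (Z l1) := by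
      field_simp
    rw [h3] at h2
    linarith
  -- atTop limit
  have hT : Tendsto (fun lam => lam * (1 - Z lam)) atTop (𝓝 (∫ m, g m * f m ∂μ)) := by
    have key : ∀ lam : ℝ, 0 < lam → lam * (1 - Z lam)
        = ∫ m, f m * (lam * (1 - Real.exp (-(g m) / lam))) ∂μ := by
      intro lam hl
      have heq : (fun m => f m * (lam * (1 - Real.exp (-(g m) / lam))))
          = fun m => lam * (f m - f m * Real.exp (-(g m) / lam)) := by
        funext m; ring
      rw [heq, integral_const_mul, integral_sub hf_int (hInt lam hl), hf_one, ← hZ]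
    have hdct : Tendsto (fun lam : ℝ => ∫ m, f m * (lam * (1 - Real.exp (-(g m) / lam))) ∂μ)
        atTop (𝓝 (∫ m, g m * f m ∂μ)) := by
      refine tendsto_integral_filter_of_dominated_convergence f ?_ ?_ hf_int ?_
      · exact Eventually.of_forall fun lam =>
          (hf_meas.mul (measurable_const.mul
            (measurable_const.sub ((hg_meas.neg.div_const lam).exp)))).aestronglyMeasurable
      · filter_upwards [eventually_gt_atTop (0:ℝ)] with lam hl
        refine Eventually.of_forall fun m => ?_
        have hinner0 : 0 ≤ lam * (1 - Real.exp (-(g m) / lam)) :=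
          mul_nonneg hl.le (by linarith [hexp01 lam hl m])
        have hinner1 : lam * (1 - Real.exp (-(g m) / lam)) ≤ 1 := by
          have hexp_ge : 1 - g m / lam ≤ Real.exp (-(g m) / lam) := by
            have := Real.add_one_le_exp (-(g m) / lam)
            have hng : -(g m) / lam = -(g m / lam) := by ring
            linarith [this, hng ▸ this]
          have h1 : lam * (1 - Real.exp (-(g m) / lam)) ≤ lam * (g m / lam) := by
            refine mul_le_mul_of_nonneg_left ?_ hl.le
            linarith
          have h2 : lam * (g m / lam) = g m := by field_simp
          linarith [hg1 m, h1, h2 ▸ h1]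
        rw [Real.norm_eq_abs, abs_of_nonneg (mul_nonneg (hf_nonneg m) hinner0)]
        calc f m * (lam * (1 - Real.exp (-(g m) / lam))) ≤ f m * 1 :=
              mul_le_mul_of_nonneg_left hinner1 (hf_nonneg m)
          _ = f m := mul_one _
      · refine Eventually.of_forall fun m => ?_
        have hpt : Tendsto (fun lam : ℝ => lam * (1 - Real.exp (-(g m) / lam))) atTop
            (𝓝 (g m)) := by
          rcases (hg0 m).eq_or_lt with h0 | hxpos
          · simp only [← h0, neg_zero, zero_div, Real.exp_zero, sub_self, mul_zero]
            exact tendsto_const_nhds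
          · have hslope : Tendsto (fun v : ℝ => (Real.exp v - 1) / v) (𝓝[≠] (0:ℝ)) (𝓝 1) := by
              have h := Real.hasDerivAt_exp 0
              rw [hasDerivAt_iff_tendsto_slope] at h
              have hfun : (fun v : ℝ => (Real.exp v - 1) / v) = slope Real.exp 0 := by
                funext v; rw [slope_def_field]; simp
              rw [hfun]
              simpa using h
            have hmap : Tendsto (fun lam : ℝ => -(g m) / lam) atTop (𝓝[≠] (0:ℝ)) := by
              refine tendsto_nhdsWithin_of_tendsto_nhds_of_eventually_within _ ?_ ?_
              · have h2 := (tendsto_inv_atTop_zero (𝕜 := ℝ)).const_mul (-(g m))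
                rw [mul_zero] at h2
                simpa [div_eq_mul_inv] using h2
              · filter_upwards [eventually_gt_atTop (0:ℝ)] with lam hlam
                simp only [Set.mem_compl_iff, Set.mem_singleton_iff]
                exact div_ne_zero (neg_ne_zero.mpr hxpos.ne') hlam.ne'
            have hcomp := (hslope.comp hmap).const_mul (g m)
            rw [mul_one] at hcomp
            refine Tendsto.congr' ?_ hcomp
            filter_upwards [eventually_gt_atTop (0:ℝ)] with lam hlam
            simp only [Function.comp]
            have hx : g m ≠ 0 := hxpos.ne'
            field_simp [hx, hlam.ne']
            ring
        have := hpt.const_mul (f m)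
        rw [mul_comm (f m) (g m)] at this
        exact this
    refine hdct.congr' ?_
    filter_upwards [eventually_gt_atTop (0:ℝ)] with lam hl
    exact (key lam hl).symm
  have hZ1lim : Tendsto Z atTop (𝓝 1) := by
    have h0 := hT.mul (tendsto_inv_atTop_zero (𝕜 := ℝ))
    rw [mul_zero] at h0
    have h1 : Tendsto (fun lam => 1 - Z lam) atTop (𝓝 0) := by
      refine h0.congr' ?_
      filter_upwards [eventually_gt_atTop (0:ℝ)] with lam hl
      field_simp [hl.ne']
    have h2 := (tendsto_const_nhds (x := (1:ℝ)) (f := atTop)).sub h1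
    rw [sub_zero] at h2
    refine h2.congr fun lam => by ring
  have htop : Tendsto V atTop (𝓝 (∫ m, g m * f m ∂μ)) := by
    have hlow : ∀ᶠ lam in atTop, lam * (1 - Z lam) ≤ V lam := by
      filter_upwards [eventually_gt_atTop (0:ℝ)] with lam hl
      rw [hV]
      have h := Real.log_le_sub_one_of_pos (hZpos lam hl)
      nlinarith
    have hup : ∀ᶠ lam in atTop, V lam ≤ lam * (1 - Z lam) / Z lam := by
      filter_upwards [eventually_gt_atTop (0:ℝ)] with lam hl
      have hZp := hZpos lam hl
      have h := Real.log_le_sub_one_of_pos (inv_pos.mpr hZp)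
      rw [Real.log_inv] at h
      have h3 : (Z lam)⁻¹ - 1 = (1 - Z lam) / Z lam := by field_simp
      rw [h3] at h
      have h4 := mul_le_mul_of_nonneg_left h hl.le
      rw [hV]
      calc -lam * Real.log (Z lam) = lam * (-Real.log (Z lam)) := by ring
        _ ≤ lam * ((1 - Z lam) / Z lam) := h4
        _ = lam * (1 - Z lam) / Z lam := by ring
    have hupT : Tendsto (fun lam => lam * (1 - Z lam) / Z lam) atTop
        (𝓝 (∫ m, g m * f m ∂μ)) := by
      have h : Tendsto (fun lam => lam * (1 - Z lam) / Z lam) atTop (𝓝 ((∫ m, g m * f m ∂μ) / 1)) :=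
        hT.div hZ1lim one_ne_zero
      rw [div_one] at h
      exact h
    exact tendsto_of_tendsto_of_tendsto_of_le_of_le' hT hupT hlow hup
  -- Part 3 : bounds
  have hbnd : ∀ lam, 0 < lam → 0 ≤ V lam ∧ V lam ≤ ∫ m, g m * f m ∂μ := by
    intro lam hl
    constructor
    · rw [hV]
      have h := Real.log_nonpos (hZpos lam hl).le (hZ1 lam hl)
      nlinarith
    · refine ge_of_tendsto htop ?_
      filter_upwards [eventually_ge_atTop lam] with l hl'
      exact hmono (Set.mem_Ioi.mpr hl) (Set.mem_Ioi.mpr (lt_of_lt_of_le hl hl')) hl'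
  -- Part 5 : limit at 0⁺
  have hbddbelow : IsBoundedUnder (· ≥ ·) (ae ν) g := isBoundedUnder_of ⟨0, fun m => hg0 m⟩
  have hbddabove : IsBoundedUnder (· ≤ ·) (ae ν) g := isBoundedUnder_of ⟨1, fun m => hg1 m⟩
  have h_ae : ∀ᵐ m ∂ν, essInf g ν ≤ g m := ae_essInf_le hbddbelow
  have hVlb : ∀ lam, 0 < lam → essInf g ν ≤ V lam := by
    intro lam hl
    have hle : Z lam ≤ Real.exp (-(essInf g ν) / lam) := by
      rw [hZν lam]
      calc ∫ m, Real.exp (-(g m) / lam) ∂ν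
          ≤ ∫ _, Real.exp (-(essInf g ν) / lam) ∂ν := by
            refine integral_mono_ae (hIntν lam hl) (integrable_const _) ?_
            filter_upwards [h_ae] with m hm
            refine Real.exp_le_exp.mpr ?_
            gcongr
        _ = Real.exp (-(essInf g ν) / lam) := by simp
    have hlogle : Real.log (Z lam) ≤ -(essInf g ν) / lam := by
      calc Real.log (Z lam) ≤ Real.log (Real.exp (-(essInf g ν) / lam)) :=
            Real.log_le_log (hZpos lam hl) hle
        _ = -(essInf g ν) / lam := Real.log_exp _
    rw [hV]
    have h2 := mul_le_mul_of_nonneg_left hlogle hl.le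
    rw [show lam * (-(essInf g ν) / lam) = -(essInf g ν) from by
      field_simp] at h2
    linarith
  have hcε : ∀ b, essInf g ν < b → ν {m | g m < b} ≠ 0 := by
    intro b hb hcontra
    have hae2 : ∀ᵐ m ∂ν, b ≤ g m := by
      rw [ae_iff]
      convert hcontra using 2
      ext m
      simp [not_le]
    have hle : b ≤ essInf g ν :=
      Filter.le_liminf_of_le hbddabove.isCoboundedUnder_ge hae2
    exact absurd hle (not_le.mpr hb)
  have hlim0 : Tendsto V (nhdsWithin 0 (Set.Ioi (0:ℝ))) (𝓝 (essInf g ν)) := by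
    rw [tendsto_order]
    constructor
    · intro a ha
      filter_upwards [self_mem_nhdsWithin] with lam hlam
      exact lt_of_lt_of_le ha (hVlb lam hlam)
    · intro b hb
      set c := essInf g ν with hc
      set ε := (b - c) / 2 with hε
      have hεpos : 0 < ε := by simp only [hε]; linarith
      have hνs : ν {m | g m < c + ε} ≠ 0 := hcε (c + ε) (by simp only [hε]; linarith)
      set δ := (ν {m | g m < c + ε}).toReal with hδ
      have hδpos : 0 < δ := ENNReal.toReal_pos hνs (measure_ne_top ν _)
      have hs_meas : MeasurableSet {m | g m < c + ε} :=
        measurableSet_lt hg_meas measurable_const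
      have hVub : ∀ lam, 0 < lam → V lam ≤ (c + ε) + lam * (-Real.log δ) := by
        intro lam hl
        have hlb : δ * Real.exp (-(c + ε) / lam) ≤ Z lam := by
          have hptw : ∀ m, Set.indicator {m | g m < c + ε}
              (fun _ => Real.exp (-(c + ε) / lam)) m ≤ Real.exp (-(g m) / lam) := by
            intro m
            by_cases hm : m ∈ {m | g m < c + ε}
            · rw [Set.indicator_of_mem hm]
              refine Real.exp_le_exp.mpr ?_
              have hmm : g m < c + ε := hm
              gcongr
            · rw [Set.indicator_of_notMem hm]
              exact (Real.exp_pos _).le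
          calc δ * Real.exp (-(c + ε) / lam)
              = ∫ m, Set.indicator {m | g m < c + ε}
                  (fun _ => Real.exp (-(c + ε) / lam)) m ∂ν := by
                rw [integral_indicator_const _ hs_meas, smul_eq_mul]
                rfl
            _ ≤ ∫ m, Real.exp (-(g m) / lam) ∂ν :=
                integral_mono ((integrable_const _).indicator hs_meas) (hIntν lam hl) hptw
            _ = Z lam := (hZν lam).symm
        have hlogZ : Real.log δ + (-(c + ε) / lam) ≤ Real.log (Z lam) := by
          have h := Real.log_le_log (mul_pos hδpos (Real.exp_pos _)) hlb
          rwa [Real.log_mul (ne_of_gt hδpos) (Real.exp_ne_zero _), Real.log_exp] at h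
        rw [hV]
        have h2 := mul_le_mul_of_nonneg_left hlogZ hl.le
        rw [mul_add, show lam * (-(c + ε) / lam) = -(c + ε) from by
          field_simp] at h2
        nlinarith
      have htend : Tendsto (fun lam : ℝ => (c + ε) + lam * (-Real.log δ))
          (nhdsWithin 0 (Set.Ioi (0:ℝ))) (𝓝 (c + ε)) := by
        have hcont : Continuous fun lam : ℝ => (c + ε) + lam * (-Real.log δ) :=
          continuous_const.add (continuous_id.mul continuous_const)
        have := hcont.tendsto 0
        simp only [zero_mul, add_zero] at this
        exact this.mono_left nhdsWithin_le_nhds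
      have hevent := htend.eventually_lt_const (show c + ε < b by simp only [hε]; linarith)
      filter_upwards [hevent, self_mem_nhdsWithin] with lam h1 h2
      exact lt_of_le_of_lt (hVub lam h2) h1
  exact ⟨hpart1, hmono, hbnd, htop, hlim0⟩
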